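/- arXiv:1705.05117 — 2 statements merged into one kernel-verified Lean document; each statement's English description precedes it below -/
import Mathlib

section
/- Let y : [0,∞) → ℝ be a nonnegative differentiable function and let σ, c₁, c₂ ∈ (0,∞) be constants such that y′(t) ≤ c₁·y(t)^{1+σ} + c₂ for all t ≥ 0. Set v₀ = y(0) + 1. Then for every t ≥ 0 such that (v₀^{−σ} + c₁/c₂)·e^{−σ c₂ t} − c₁/c₂ > 0, one has y(t) ≤ ((v₀^{−σ} + c₁/c₂)·e^{−σ c₂ t} − c₁/c₂)^{−1/σ} − 1. -/
open Real Set

/-- Gronwall-type lemma (Lemma 2.1): if `y` is nonnegative and differentiable on `[0,∞)`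
with `y' ≤ c₁ y^{1+σ} + c₂`, then `y(t) ≤ ((v₀^{-σ} + c₁/c₂) e^{-σ c₂ t} - c₁/c₂)^{-1/σ} - 1`
wherever the expression in parentheses is positive, where `v₀ = y(0) + 1`. -/
theorem stmt_0 (y y' : ℝ → ℝ) (σ c₁ c₂ : ℝ)
    (hσ : 0 < σ) (hc₁ : 0 < c₁) (hc₂ : 0 < c₂)
    (hy_nonneg : ∀ t, 0 ≤ t → 0 ≤ y t)
    (hy_deriv : ∀ t, 0 ≤ t → HasDerivWithinAt y (y' t) (Set.Ici 0) t)
    (hineq : ∀ t, 0 ≤ t → y' t ≤ c₁ * (y t) ^ (1 + σ) + c₂) :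
    ∀ t, 0 ≤ t →
      0 < ((y 0 + 1) ^ (-σ) + c₁ / c₂) * Real.exp (-σ * c₂ * t) - c₁ / c₂ →
      y t ≤ (((y 0 + 1) ^ (-σ) + c₁ / c₂) * Real.exp (-σ * c₂ * t) - c₁ / c₂) ^ (-(1 / σ)) - 1 := by
  have hk0 : 0 < c₁ / c₂ := div_pos hc₁ hc₂
  have hv : ∀ s, 0 ≤ s → (1:ℝ) ≤ y s + 1 := fun s hs => by linarith [hy_nonneg s hs]
  set g : ℝ → ℝ := fun s => ((y s + 1) ^ (-σ) + c₁ / c₂) * Real.exp (σ * c₂ * s) with hg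
  set g' : ℝ → ℝ := fun s => (y' s * (-σ) * (y s + 1) ^ (-σ - 1)) * Real.exp (σ * c₂ * s)
      + ((y s + 1) ^ (-σ) + c₁ / c₂) * (σ * c₂ * Real.exp (σ * c₂ * s)) with hg'
  have hgd : ∀ s, 0 ≤ s → HasDerivWithinAt g (g' s) (Ici 0) s := by
    intro s hs
    have h1 : HasDerivWithinAt (fun u => y u + 1) (y' s) (Ici 0) s :=
      (hy_deriv s hs).add_const 1
    have h2 : HasDerivWithinAt (fun u => (y u + 1) ^ (-σ) + c₁ / c₂)
        (y' s * (-σ) * (y s + 1) ^ (-σ - 1)) (Ici 0) s :=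
      (h1.rpow_const (Or.inl (by have := hv s hs; positivity))).add_const _
    have h3 : HasDerivAt (fun u : ℝ => Real.exp (σ * c₂ * u))
        (σ * c₂ * Real.exp (σ * c₂ * s)) s := by
      have := ((hasDerivAt_id s).const_mul (σ * c₂)).exp
      simpa [mul_comm] using this
    exact h2.mul h3.hasDerivWithinAt
  have hg'nonneg : ∀ s, 0 < s → 0 ≤ g' s := by
    intro s hs
    have hs' : (0:ℝ) ≤ s := hs.le
    have hvs : (1:ℝ) ≤ y s + 1 := hv s hs'
    have hvpos : (0:ℝ) < y s + 1 := by linarith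
    have hy'le : y' s ≤ c₁ * (y s + 1) ^ (1 + σ) + c₂ := by
      have h1 : (y s) ^ (1 + σ) ≤ (y s + 1) ^ (1 + σ) :=
        Real.rpow_le_rpow (hy_nonneg s hs') (by linarith) (by linarith)
      have := hineq s hs'
      nlinarith [h1]
    -- key: σ c₂ (v^{-σ} + c₁/c₂) ≥ σ v^{-σ-1} y'
    have hp1 : (0:ℝ) < (y s + 1) ^ (-σ - 1) := Real.rpow_pos_of_pos hvpos _
    have hmul : (y s + 1) ^ (-σ - 1) * y' s ≤ c₁ + c₂ * (y s + 1) ^ (-σ) := by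
      have h2 : (y s + 1) ^ (-σ - 1) * y' s ≤
          (y s + 1) ^ (-σ - 1) * (c₁ * (y s + 1) ^ (1 + σ) + c₂) :=
        mul_le_mul_of_nonneg_left hy'le hp1.le
      have h3 : (y s + 1) ^ (-σ - 1) * (y s + 1) ^ (1 + σ) = 1 := by
        have he : -σ - 1 + (1 + σ) = 0 := by ring
        rw [← Real.rpow_add hvpos, he, Real.rpow_zero]
      have h4 : (y s + 1) ^ (-σ - 1) ≤ (y s + 1) ^ (-σ) :=
        Real.rpow_le_rpow_of_exponent_le hvs (by linarith)
      calc (y s + 1) ^ (-σ - 1) * y' s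
          ≤ (y s + 1) ^ (-σ - 1) * (c₁ * (y s + 1) ^ (1 + σ) + c₂) := h2
        _ = c₁ + c₂ * (y s + 1) ^ (-σ - 1) := by linear_combination c₁ * h3
        _ ≤ c₁ + c₂ * (y s + 1) ^ (-σ) := by nlinarith [h4]
    have hexp : (0:ℝ) < Real.exp (σ * c₂ * s) := Real.exp_pos _
    have : g' s = Real.exp (σ * c₂ * s) *
        (σ * (c₁ + c₂ * (y s + 1) ^ (-σ)) - σ * ((y s + 1) ^ (-σ - 1) * y' s)) := by
      rw [hg']; field_simp; ring
    rw [this]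
    have : 0 ≤ σ * (c₁ + c₂ * (y s + 1) ^ (-σ)) - σ * ((y s + 1) ^ (-σ - 1) * y' s) := by
      have := mul_le_mul_of_nonneg_left hmul hσ.le
      linarith
    positivity
  have hcont : ContinuousOn g (Ici 0) := by
    apply ContinuousOn.mul
    · apply ContinuousOn.add
      · apply ContinuousOn.rpow_const
        · exact fun s hs => ((hy_deriv s hs).continuousWithinAt.add continuousWithinAt_const)
        · intro s hs
          exact Or.inl (by have := hv s hs; positivity)
      · exact continuousOn_const
    · exact (Real.continuous_exp.comp (continuous_const.mul continuous_id)).continuousOn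
  have hmono : MonotoneOn g (Ici 0) := by
    apply monotoneOn_of_hasDerivWithinAt_nonneg (convex_Ici 0) hcont
    · intro s hs
      rw [interior_Ici] at hs ⊢
      exact ((hgd s (le_of_lt hs)).mono (Ioi_subset_Ici le_rfl))
    · intro s hs
      rw [interior_Ici] at hs
      exact hg'nonneg s hs
  intro t ht hE
  have hg0 : g 0 = (y 0 + 1) ^ (-σ) + c₁ / c₂ := by simp [hg]
  have hgt : g 0 ≤ g t := hmono self_mem_Ici ht ht
  -- deduce (y t + 1)^{-σ} ≥ E
  have hexp : (0:ℝ) < Real.exp (σ * c₂ * t) := Real.exp_pos _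
  have hEexp : Real.exp (-σ * c₂ * t) = (Real.exp (σ * c₂ * t))⁻¹ := by
    rw [← Real.exp_neg]; ring_nf
  set E : ℝ := ((y 0 + 1) ^ (-σ) + c₁ / c₂) * Real.exp (-σ * c₂ * t) - c₁ / c₂ with hEdef
  have hEle : E ≤ (y t + 1) ^ (-σ) := by
    have : ((y 0 + 1) ^ (-σ) + c₁ / c₂) ≤ ((y t + 1) ^ (-σ) + c₁ / c₂) * Real.exp (σ * c₂ * t) := by
      rw [← hg0]; exact hgt
    rw [hEdef, hEexp]
    have h2 : ((y 0 + 1) ^ (-σ) + c₁ / c₂) / Real.exp (σ * c₂ * t)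
        ≤ (y t + 1) ^ (-σ) + c₁ / c₂ := (div_le_iff₀ hexp).mpr this
    rw [div_eq_mul_inv] at h2
    linarith
  -- now invert
  have hvpos : (0:ℝ) < y t + 1 := by linarith [hv t ht]
  have hfin : (y t + 1) ≤ E ^ (-(1/σ)) := by
    have h1 : ((y t + 1) ^ (-σ)) ^ (-(1/σ)) ≤ E ^ (-(1/σ)) :=
      (Real.rpow_le_rpow_iff_of_neg (by positivity) hE
        (neg_lt_zero.mpr (by positivity))).mpr hEle
    calc y t + 1 = ((y t + 1) ^ (-σ)) ^ (-(1/σ)) := by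
          rw [← Real.rpow_mul hvpos.le]
          have he : -σ * -(1/σ) = 1 := by field_simp
          rw [he, Real.rpow_one]
      _ ≤ E ^ (-(1/σ)) := h1
  linarith
end

section
/- Let α, λ ∈ (0,∞) be given and let {b_k}_{k≥0} be a sequence of nonnegative real numbers satisfying b_k ≤ b_0 + λ·b_{k−1}^{1+α} for all k = 1, 2, …. If 2λ·(2b_0)^α < 1, then b_k ≤ b_0 / (1 − λ·(2b_0)^α) for all k ≥ 0. -/
/-- Lemma 2.2: if `b_k ≤ b_0 + λ b_{k-1}^(1+α)` for a sequence of nonnegative numbers and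
`2λ(2b₀)^α < 1`, then `b_k ≤ b₀ / (1 - λ (2b₀)^α)` for all `k`. -/
theorem stmt_1 (α lam : ℝ) (hα : 0 < α) (hlam : 0 < lam)
    (b : ℕ → ℝ) (hb : ∀ k, 0 ≤ b k)
    (hrec : ∀ k : ℕ, 1 ≤ k → b k ≤ b 0 + lam * (b (k - 1)) ^ (1 + α))
    (hsmall : 2 * lam * (2 * b 0) ^ α < 1) :
    ∀ k : ℕ, b k ≤ b 0 / (1 - lam * (2 * b 0) ^ α) := by
  set c : ℝ := lam * (2 * b 0) ^ α with hc
  have hb0 := hb 0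
  have hc0 : 0 ≤ c := by
    apply mul_nonneg hlam.le
    positivity
  have hchalf : c < 1/2 := by nlinarith
  have hd : (0:ℝ) < 1 - c := by linarith
  set M : ℝ := b 0 / (1 - c) with hM
  have hM0 : 0 ≤ M := div_nonneg hb0 hd.le
  have hM2 : M ≤ 2 * b 0 := by
    rw [hM, div_le_iff₀ hd]
    nlinarith
  have key : M ^ (1 + α) ≤ (2 * b 0) ^ α * M := by
    rw [Real.rpow_add' hM0 (by linarith), Real.rpow_one]
    calc M * M ^ α ≤ M * (2 * b 0) ^ α := by
          apply mul_le_mul_of_nonneg_left _ hM0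
          exact Real.rpow_le_rpow hM0 hM2 hα.le
      _ = (2 * b 0) ^ α * M := mul_comm _ _
  intro k
  induction k with
  | zero =>
    have hMb : M * (1 - c) = b 0 := by rw [hM]; field_simp
    nlinarith
  | succ n ih =>
    have h1 := hrec (n+1) (by omega)
    simp only [Nat.add_sub_cancel] at h1
    have h2 : b n ^ (1 + α) ≤ M ^ (1 + α) :=
      Real.rpow_le_rpow (hb n) ih (by linarith)
    have h3 : b (n+1) ≤ b 0 + lam * ((2 * b 0) ^ α * M) := by
      calc b (n+1) ≤ b 0 + lam * b n ^ (1+α) := h1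
        _ ≤ b 0 + lam * M ^ (1+α) := by nlinarith
        _ ≤ b 0 + lam * ((2 * b 0) ^ α * M) := by nlinarith
    have : b 0 + lam * ((2 * b 0) ^ α * M) = b 0 + c * M := by ring
    rw [this] at h3
    calc b (n+1) ≤ b 0 + c * M := h3
      _ ≤ M := by
          have hMb : M * (1 - c) = b 0 := by rw [hM]; field_simp
          nlinarith
      _ = b 0 / (1 - c) := hM
end
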